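/- arXiv:2510.11425 — 4 statements merged into one kernel-verified Lean document; each statement's English description precedes it below -/
import Mathlib

section
/- Let k be a field, let A = (b_{i,j}) be an N × N matrix over k, let 1 ≤ κ < N, and suppose: (i) for every κ-element subset S ⊆ {1,…,N}, the κ × κ minor of A with row set S and column set S equals a fixed nonzero scalar a; and (ii) every κ × κ minor of A whose row set differs from its column set equals 0. Then A is a nonzero scalar multiple of the identity matrix. -/
open Matrix

private lemma zero_minor_aux {k : Type} [Field k] {N κ : ℕ}
    (A : Matrix (Fin N) (Fin N) k)
    (hoff : ∀ f g : Fin κ → Fin N, StrictMono f → StrictMono g →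
      Set.range f ≠ Set.range g → (A.submatrix f g).det = 0)
    (h f : Fin κ → Fin N) (hh : StrictMono h) (hf : Function.Injective f)
    (hrng : Set.range h ≠ Set.range f) : (A.submatrix h f).det = 0 := by
  classical
  set T : Finset (Fin N) := Finset.image f Finset.univ with hTdef
  have hT : T.card = κ := by
    rw [hTdef, Finset.card_image_of_injective _ hf, Finset.card_univ, Fintype.card_fin]
  set g : Fin κ → Fin N := ⇑(T.orderEmbOfFin hT) with hgdef
  have hmemT : ∀ t, f t ∈ T := fun t => Finset.mem_image_of_mem f (Finset.mem_univ t)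
  set σ0 : Fin κ → Fin κ := fun t => (T.orderIsoOfFin hT).symm ⟨f t, hmemT t⟩ with hσdef
  have hσinj : Function.Injective σ0 := by
    intro s t hst
    simp only [hσdef] at hst
    have h2 := (T.orderIsoOfFin hT).symm.injective hst
    exact hf (congrArg Subtype.val h2)
  have hσbij : Function.Bijective σ0 := (Finite.injective_iff_bijective).mp hσinj
  set σ : Equiv.Perm (Fin κ) := Equiv.ofBijective σ0 hσbij with hσ
  have hgσ : ∀ t, g (σ t) = f t := by
    intro t
    show ((T.orderIsoOfFin hT) ((T.orderIsoOfFin hT).symm ⟨f t, hmemT t⟩) : Fin N) = f t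
    simp
  have hsub : A.submatrix h f = (A.submatrix h g).submatrix id σ := by
    ext t u
    simp [hgσ u]
  have hrange_g : Set.range g = Set.range f := by
    rw [hgdef, Finset.range_orderEmbOfFin, hTdef]
    ext x; simp
  have h0 : (A.submatrix h g).det = 0 := by
    apply hoff h g hh (T.orderEmbOfFin hT).strictMono
    rw [hrange_g]; exact hrng
  rw [hsub, Matrix.det_permute', h0, mul_zero]

private lemma exists_avoid {N κ : ℕ} (hκ : 1 ≤ κ) (hκN : κ < N) (i j : Fin N) (hij : i ≠ j) :
    ∃ X : Finset (Fin N), X.card = κ - 1 ∧ i ∉ X ∧ j ∉ X := by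
  have hcard : κ - 1 ≤ ((Finset.univ.erase i).erase j).card := by
    have h1 : ((Finset.univ.erase i).erase j).card = N - 1 - 1 := by
      rw [Finset.card_erase_of_mem (by simp [Finset.mem_erase, hij.symm]),
        Finset.card_erase_of_mem (Finset.mem_univ i), Finset.card_univ, Fintype.card_fin]
    omega
  obtain ⟨X, hXsub, hXcard⟩ := Finset.exists_subset_card_eq hcard
  refine ⟨X, hXcard, fun h => ?_, fun h => ?_⟩
  · have := hXsub h; simp [Finset.mem_erase] at this
  · have := hXsub h; simp [Finset.mem_erase] at this

/-- If all principal `κ × κ` minors of an `N × N` matrix (`1 ≤ κ < N`) equal a fixed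
nonzero scalar `a`, and every `κ × κ` minor whose row set differs from its column
set vanishes, then the matrix is a nonzero scalar multiple of the identity. -/
theorem scalar_of_minor_conditions (k : Type) [Field k] (N κ : ℕ)
    (hκ : 1 ≤ κ) (hκN : κ < N) (A : Matrix (Fin N) (Fin N) k) (a : k) (ha : a ≠ 0)
    (hprincipal : ∀ f : Fin κ → Fin N, StrictMono f → (A.submatrix f f).det = a)
    (hoff : ∀ f g : Fin κ → Fin N, StrictMono f → StrictMono g →
      Set.range f ≠ Set.range g → (A.submatrix f g).det = 0) :
    ∃ c : k, c ≠ 0 ∧ A = c • (1 : Matrix (Fin N) (Fin N) k) := by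
  classical
  -- Step A: off-diagonal entries vanish
  have hoffdiag : ∀ i j : Fin N, i ≠ j → A i j = 0 := by
    intro i j hij
    obtain ⟨X, hXcard, hiX, hjX⟩ := exists_avoid hκ hκN i j hij
    set S : Finset (Fin N) := insert i X with hSdef
    have hScard : S.card = κ := by
      rw [hSdef, Finset.card_insert_of_notMem hiX, hXcard]; omega
    have hjS : j ∉ S := by
      rw [hSdef]; simp [Finset.mem_insert, hij.symm, hjX]
    set e : Fin κ → Fin N := ⇑(S.orderEmbOfFin hScard) with hedef
    have heS : Set.range e = ↑S := by rw [hedef]; exact Finset.range_orderEmbOfFin _ _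
    have heinj : Function.Injective e := (S.orderEmbOfFin hScard).injective
    set B : Matrix (Fin κ) (Fin κ) k := A.submatrix e e with hBdef
    have hBdet : B.det = a := hprincipal e (S.orderEmbOfFin hScard).strictMono
    set c : Fin κ → k := fun t => A (e t) j with hcdef
    -- each Cramer determinant is an off-diagonal minor, hence zero
    have hcram : ∀ s : Fin κ, (B.updateCol s c).det = 0 := by
      intro s
      have heq : B.updateCol s c = A.submatrix e (Function.update e s j) := by
        ext t u
        by_cases hu : u = s <;>
          simp [hu, Matrix.updateCol_apply, Function.update_apply, hBdef, hcdef]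
      rw [heq]
      apply zero_minor_aux A hoff e _ (S.orderEmbOfFin hScard).strictMono
      · intro u v huv
        by_cases hu : u = s <;> by_cases hv : v = s
        · rw [hu, hv]
        · exfalso; apply hjS
          rw [hu, Function.update_self] at huv
          have hjr : j ∈ Set.range e := ⟨v, by rw [Function.update_of_ne hv] at huv; exact huv.symm⟩
          rw [heS] at hjr; simpa using hjr
        · exfalso; apply hjS
          rw [hv, Function.update_self] at huv
          have hjr : j ∈ Set.range e := ⟨u, by rw [Function.update_of_ne hu] at huv; exact huv⟩
          rw [heS] at hjr; simpa using hjr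
        · rw [Function.update_of_ne hu, Function.update_of_ne hv] at huv
          exact heinj huv
      · intro hr
        apply hjS
        have hjr : j ∈ Set.range e := by
          rw [hr]; exact ⟨s, Function.update_self s j e⟩
        rw [heS] at hjr; simpa using hjr
    have hcz : c = 0 := by
      have h1 : B *ᵥ Matrix.cramer B c = B.det • c := Matrix.mulVec_cramer B c
      have h2 : Matrix.cramer B c = 0 := by
        ext s; simpa [Matrix.cramer_apply] using hcram s
      rw [h2, hBdet] at h1
      have h3 : a • c = 0 := by simpa using h1.symm
      funext t
      have := congrFun h3 t
      simp only [Pi.smul_apply, smul_eq_mul, Pi.zero_apply] at this ⊢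
      exact (mul_eq_zero.mp this).resolve_left ha
    have hiS : i ∈ S := Finset.mem_insert_self i X
    obtain ⟨t, ht⟩ : ∃ t, e t = i := by
      have : i ∈ Set.range e := by rw [heS]; exact Finset.mem_coe.mpr hiS
      exact this
    have := congrFun hcz t
    simpa [hcdef, ht] using this
  -- principal minors are products of diagonal entries
  have hprod : ∀ S : Finset (Fin N), S.card = κ → ∏ x ∈ S, A x x = a := by
    intro S hS
    have hsm := (S.orderEmbOfFin hS).strictMono
    have hinj := (S.orderEmbOfFin hS).injective
    have hdiag : A.submatrix (S.orderEmbOfFin hS) (S.orderEmbOfFin hS)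
        = Matrix.diagonal (fun t => A (S.orderEmbOfFin hS t) (S.orderEmbOfFin hS t)) := by
      ext t u
      by_cases htu : t = u
      · subst htu; simp
      · simp [Matrix.diagonal_apply_ne _ htu,
          hoffdiag _ _ (fun h => htu (hinj h))]
    have h1 : ∏ t : Fin κ, A (S.orderEmbOfFin hS t) (S.orderEmbOfFin hS t) = a := by
      have := hprincipal (S.orderEmbOfFin hS) hsm
      rwa [hdiag, Matrix.det_diagonal] at this
    have hSim : Finset.image (⇑(S.orderEmbOfFin hS)) Finset.univ = S := by
      rw [← Finset.coe_inj, Finset.coe_image, Finset.coe_univ, Set.image_univ,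
        Finset.range_orderEmbOfFin]
    calc ∏ x ∈ S, A x x
        = ∏ x ∈ Finset.image (⇑(S.orderEmbOfFin hS)) Finset.univ, A x x := by rw [hSim]
      _ = ∏ t : Fin κ, A ((S.orderEmbOfFin hS) t) ((S.orderEmbOfFin hS) t) :=
          Finset.prod_image (fun x _ y _ h => hinj h)
      _ = a := h1
  -- all diagonal entries are equal and nonzero
  have hdiageq : ∀ i j : Fin N, A i i = A j j := by
    intro i j
    by_cases hij : i = j
    · rw [hij]
    obtain ⟨X, hXcard, hiX, hjX⟩ := exists_avoid hκ hκN i j hij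
    have hi : A i i * ∏ x ∈ X, A x x = a := by
      have := hprod (insert i X) (by rw [Finset.card_insert_of_notMem hiX, hXcard]; omega)
      rwa [Finset.prod_insert hiX] at this
    have hj : A j j * ∏ x ∈ X, A x x = a := by
      have := hprod (insert j X) (by rw [Finset.card_insert_of_notMem hjX, hXcard]; omega)
      rwa [Finset.prod_insert hjX] at this
    have hpne : ∏ x ∈ X, A x x ≠ 0 := fun h => ha (by rw [← hi, h, mul_zero])
    exact mul_right_cancel₀ hpne (hi.trans hj.symm)
  have hN : 0 < N := by omega
  set i0 : Fin N := ⟨0, hN⟩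
  refine ⟨A i0 i0, ?_, ?_⟩
  · intro h0
    obtain ⟨X, hXcard, hiX, _⟩ := exists_avoid hκ hκN i0 ⟨1, by omega⟩ (by
      intro h; exact absurd (congrArg Fin.val h) (by simp [i0]))
    have := hprod (insert i0 X) (by rw [Finset.card_insert_of_notMem hiX, hXcard]; omega)
    rw [Finset.prod_insert hiX, h0, zero_mul] at this
    exact ha this.symm
  · ext i j
    by_cases hij : i = j
    · subst hij
      simp [Matrix.smul_apply, Matrix.one_apply, hdiageq i i0]
    · simp [Matrix.smul_apply, Matrix.one_apply, hij, hoffdiag i j hij]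
end

section
/- Let i ≤ r and let G be the m × n matrix over k[t] of block form G = diag(I_{i-1}, 0) + t·[[0,0],[0,M]] with M an (m−i+1) × (n−i+1) matrix over k[t]. Then every r × r minor of G, viewed as a polynomial in t, has t-adic order at least r − i + 1; moreover, a minor on rows {k_1 < ⋯ < k_r} and columns {j_1 < ⋯ < j_r} has a nonzero coefficient of t^{r-i+1} only if {k_1,…,k_{i-1}} = {j_1,…,j_{i-1}} = {1,…,i−1}, in which case that coefficient equals the (r−i+1) × (r−i+1) minor of M(0) on rows {k_i − i + 1, …, k_r − i + 1} and columns {j_i − i + 1, …, j_r − i + 1}. -/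
open Matrix Polynomial

private lemma fin_strictMono_le {s t : ℕ} {f : Fin s → Fin t} (hf : StrictMono f) (v : Fin s) :
    (v : ℕ) ≤ (f v : ℕ) := by
  suffices H : ∀ N (v : Fin s), (v : ℕ) = N → (v : ℕ) ≤ (f v : ℕ) from H _ v rfl
  intro N
  induction N with
  | zero => intro v _; omega
  | succ w ih =>
    intro v hv
    have hw : w < s := by omega
    have h1 := ih ⟨w, hw⟩ rfl
    have h2 : f ⟨w, hw⟩ < f v := hf (by simp [Fin.lt_def, hv])
    rw [Fin.lt_def] at h2
    simp only [Fin.val_mk] at h1 h2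
    omega

private lemma fin_strictMono_id_on {s t a : ℕ} {f : Fin s → Fin t} (hf : StrictMono f)
    (ha : a ≤ s) (h : ∀ v : Fin s, (v : ℕ) < a → (f v : ℕ) < a) :
    ∀ v : Fin s, (v : ℕ) < a → (f v : ℕ) = (v : ℕ) := by
  have hg : StrictMono (fun u : Fin a =>
      (⟨(f ⟨(u : ℕ), lt_of_lt_of_le u.isLt ha⟩ : ℕ), h _ u.isLt⟩ : Fin a)) := by
    intro x y hxy
    exact hf (show (⟨(x : ℕ), lt_of_lt_of_le x.isLt ha⟩ : Fin s) <
      ⟨(y : ℕ), lt_of_lt_of_le y.isLt ha⟩ from hxy)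
  have hsurj : Function.Surjective _ := Finite.injective_iff_surjective.mp hg.injective
  have hgid := (hg.range_inj strictMono_id).mp
    (by rw [Set.range_id]; exact Set.range_eq_univ.mpr hsurj)
  intro v hv
  have h2 := congrArg Fin.val (congrFun hgid ⟨(v : ℕ), hv⟩)
  simpa using h2

/-- Leading behavior of `r × r` minors of `G = diag(I_a, 0) + t·[[0,0],[0,M]]`
(with `a = i - 1`, `ρ = r - i + 1`, so `r = a + ρ`): every `r × r` minor has
`t`-adic order at least `ρ`; its coefficient of `t^ρ` can be nonzero only if the
first `a` selected rows and columns are exactly the first `a` indices, in which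
case that coefficient equals the corresponding `ρ × ρ` minor of `M(0)`. -/
theorem minor_leading_coefficient (k : Type) [Field k] (a ρ m n : ℕ)
    (hρ : 1 ≤ ρ) (hm : a + ρ ≤ m) (hmn : m ≤ n)
    (M G : Matrix (Fin m) (Fin n) (Polynomial k))
    (hG : ∀ i j, G i j =
      (if (i : ℕ) = (j : ℕ) ∧ (i : ℕ) < a then 1 else 0) +
      (if a ≤ (i : ℕ) ∧ a ≤ (j : ℕ) then Polynomial.X * M i j else 0))
    (rows : Fin (a + ρ) → Fin m) (cols : Fin (a + ρ) → Fin n)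
    (hrows : StrictMono rows) (hcols : StrictMono cols) :
    (∀ w : ℕ, w < ρ → ((G.submatrix rows cols).det).coeff w = 0) ∧
    (((G.submatrix rows cols).det).coeff ρ ≠ 0 →
      ∀ v : Fin (a + ρ), (v : ℕ) < a → ((rows v : ℕ) = (v : ℕ) ∧ (cols v : ℕ) = (v : ℕ))) ∧
    ((∀ v : Fin (a + ρ), (v : ℕ) < a → ((rows v : ℕ) = (v : ℕ) ∧ (cols v : ℕ) = (v : ℕ))) →
      ((G.submatrix rows cols).det).coeff ρ =
        (Matrix.of (fun (u w : Fin ρ) =>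
          (M (rows ⟨a + (u : ℕ), by omega⟩) (cols ⟨a + (w : ℕ), by omega⟩)).coeff 0)).det) := by
  have hrle := fun v => fin_strictMono_le hrows v
  have hcle := fun v => fin_strictMono_le hcols v
  set D : Matrix (Fin (a + ρ)) (Fin (a + ρ)) (Polynomial k) := Matrix.of (fun u v =>
    if (u : ℕ) < a then G (rows u) (cols v)
    else if a ≤ (cols v : ℕ) then M (rows u) (cols v) else 0) with hD
  have hfact : G.submatrix rows cols =
      Matrix.of (fun (u v : Fin (a + ρ)) =>
        (if (u : ℕ) < a then (1 : Polynomial k) else X) * D u v) := by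
    ext u v
    simp only [Matrix.of_apply, submatrix_apply, hD]
    by_cases hu : (u : ℕ) < a
    · simp [hu]
    · have h1 : a ≤ (rows u : ℕ) := le_trans (by omega) (hrle u)
      rw [hG]
      have hne : ¬((rows u : ℕ) = (cols v : ℕ) ∧ (rows u : ℕ) < a) := fun h => by omega
      by_cases hc : a ≤ (cols v : ℕ)
      · simp [hu, hc, h1, hne]
      · simp [hu, hc, hne]
  have hprodX : (∏ u : Fin (a + ρ), (if (u : ℕ) < a then (1 : Polynomial k) else X)) = X ^ ρ := by
    rw [Fin.prod_univ_eq_prod_range (fun i => if i < a then (1 : Polynomial k) else X)]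
    rw [Finset.prod_range_add,
        Finset.prod_congr rfl (fun i hi => if_pos (Finset.mem_range.mp hi)),
        Finset.prod_congr rfl (fun (i : ℕ) _ => if_neg (by omega : ¬ a + i < a))]
    simp
  have hdet : (G.submatrix rows cols).det = X ^ ρ * D.det := by
    rw [hfact, Matrix.det_mul_column, hprodX]
  have part1 : ∀ w : ℕ, w < ρ → ((G.submatrix rows cols).det).coeff w = 0 := by
    intro w hw
    exact Polynomial.X_pow_dvd_iff.mp ⟨D.det, hdet⟩ w hw
  set N₀ : Matrix (Fin (a + ρ)) (Fin (a + ρ)) k := Matrix.of (fun u v =>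
    if (u : ℕ) < a then (if (rows u : ℕ) = (cols v : ℕ) ∧ (rows u : ℕ) < a then 1 else 0)
    else if a ≤ (cols v : ℕ) then (M (rows u) (cols v)).coeff 0 else 0) with hN₀
  have hmap : D.map (Polynomial.constantCoeff) = N₀ := by
    ext u v
    simp only [Matrix.map_apply, Matrix.of_apply, hD, hN₀]
    by_cases hu : (u : ℕ) < a
    · rw [if_pos hu, if_pos hu, hG]
      by_cases h3 : (rows u : ℕ) = (cols v : ℕ) ∧ (rows u : ℕ) < a
      · have h2 : ¬(a ≤ (rows u : ℕ) ∧ a ≤ (cols v : ℕ)) := by omega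
        rw [if_pos h3, if_pos h3, if_neg h2]
        simp
      · rw [if_neg h3, if_neg h3]
        by_cases h2 : a ≤ (rows u : ℕ) ∧ a ≤ (cols v : ℕ)
        · rw [if_pos h2]
          simp [constantCoeff_apply, Polynomial.mul_coeff_zero]
        · rw [if_neg h2]
          simp
    · rw [if_neg hu, if_neg hu]
      split_ifs with h2
      · rfl
      · simp
  have hcoeff : ((G.submatrix rows cols).det).coeff ρ = N₀.det := by
    rw [hdet, Polynomial.coeff_X_pow_mul' D.det ρ ρ, if_pos le_rfl, Nat.sub_self,
      ← Polynomial.constantCoeff_apply, RingHom.map_det, ← hmap]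
    rfl
  refine ⟨part1, ?_, ?_⟩
  · -- part 2
    intro hne
    rw [hcoeff] at hne
    rw [Matrix.det_apply] at hne
    have hex : ∃ σ : Equiv.Perm (Fin (a + ρ)), ∀ i, N₀ (σ i) i ≠ 0 := by
      by_contra hc
      push_neg at hc
      apply hne
      refine Finset.sum_eq_zero fun σ _ => ?_
      obtain ⟨i, hi⟩ := hc σ
      have hz : (∏ j, N₀ (σ j) j) = 0 := Finset.prod_eq_zero (Finset.mem_univ i) hi
      rw [hz, smul_zero]
    obtain ⟨σ, hfac⟩ := hex
    have key1 : ∀ i : Fin (a + ρ), (σ i : ℕ) < a →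
        (rows (σ i) : ℕ) = (cols i : ℕ) ∧ (rows (σ i) : ℕ) < a := by
      intro i hi
      have h := hfac i
      rw [hN₀] at h
      simp only [Matrix.of_apply, if_pos hi] at h
      by_contra hc
      rw [if_neg hc] at h
      exact h rfl
    have key2 : ∀ i : Fin (a + ρ), (σ i : ℕ) < a → (i : ℕ) < a := by
      intro i hi
      have h := key1 i hi
      have := hcle i
      omega
    have key2' : ∀ u : Fin (a + ρ), (u : ℕ) < a → ((σ.symm u : ℕ) < a) := by
      intro u hu
      exact key2 (σ.symm u) (by simpa using hu)
    -- σ maps {<a} into {<a}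
    have key3 : ∀ u : Fin (a + ρ), (u : ℕ) < a → (σ u : ℕ) < a := by
      have hTsub : Finset.image (fun i => σ.symm i)
          (Finset.univ.filter (fun i : Fin (a + ρ) => (i : ℕ) < a)) ⊆
          Finset.univ.filter (fun i : Fin (a + ρ) => (i : ℕ) < a) := by
        intro x hx
        simp only [Finset.mem_image, Finset.mem_filter, Finset.mem_univ, true_and] at hx ⊢
        obtain ⟨i, hi, rfl⟩ := hx
        exact key2' i hi
      have hcard : (Finset.image (fun i => σ.symm i)
          (Finset.univ.filter (fun i : Fin (a + ρ) => (i : ℕ) < a))).card =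
          (Finset.univ.filter (fun i : Fin (a + ρ) => (i : ℕ) < a)).card :=
        Finset.card_image_of_injective _ σ.symm.injective
      have heq := Finset.eq_of_subset_of_card_le hTsub (le_of_eq hcard.symm)
      intro u hu
      have hu' : u ∈ Finset.univ.filter (fun i : Fin (a + ρ) => (i : ℕ) < a) := by
        simp [hu]
      rw [← heq] at hu'
      simp only [Finset.mem_image, Finset.mem_filter, Finset.mem_univ, true_and] at hu'
      obtain ⟨i, hi, hieq⟩ := hu'
      have : σ u = i := by rw [← hieq]; simp
      rw [this]; exact hi
    have hrowsa : ∀ u : Fin (a + ρ), (u : ℕ) < a → (rows u : ℕ) < a := by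
      intro u hu
      have h := key1 (σ.symm u) (by simpa using hu)
      simpa using h.2
    have hcolsa : ∀ i : Fin (a + ρ), (i : ℕ) < a → (cols i : ℕ) < a := by
      intro i hi
      have h := key1 i (key3 i hi)
      omega
    intro v hv
    exact ⟨fin_strictMono_id_on hrows (by omega) hrowsa v hv,
      fin_strictMono_id_on hcols (by omega) hcolsa v hv⟩
  · -- part 3
    intro hid
    rw [hcoeff]
    rw [← Matrix.det_submatrix_equiv_self (finSumFinEquiv (m := a) (n := ρ)) N₀]
    have hblock : N₀.submatrix (finSumFinEquiv (m := a) (n := ρ)) finSumFinEquiv =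
        Matrix.fromBlocks 1 0 0 (Matrix.of (fun (u w : Fin ρ) =>
          (M (rows ⟨a + (u : ℕ), by omega⟩) (cols ⟨a + (w : ℕ), by omega⟩)).coeff 0)) := by
      ext i j
      cases i with
      | inl u =>
        cases j with
        | inl v =>
          have hu : ((finSumFinEquiv (Sum.inl u) : Fin (a + ρ)) : ℕ) = (u : ℕ) := by simp
          have hv : ((finSumFinEquiv (Sum.inl v) : Fin (a + ρ)) : ℕ) = (v : ℕ) := by simp
          have hr := (hid _ (by rw [hu]; exact u.isLt)).1
          have hc := (hid _ (by rw [hv]; exact v.isLt)).2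
          simp only [submatrix_apply, hN₀, Matrix.of_apply, fromBlocks_apply₁₁,
            Matrix.one_apply]
          rw [if_pos (by rw [hu]; exact u.isLt), hr, hc, hu, hv]
          by_cases huv : u = v
          · rw [if_pos ⟨by rw [huv], u.isLt⟩, if_pos huv]
          · rw [if_neg (fun h => huv (Fin.ext h.1)), if_neg huv]
        | inr w =>
          have hu : ((finSumFinEquiv (Sum.inl u) : Fin (a + ρ)) : ℕ) = (u : ℕ) := by simp
          have hw : ((finSumFinEquiv (Sum.inr w) : Fin (a + ρ)) : ℕ) = a + (w : ℕ) := by simp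
          have hr := (hid _ (by rw [hu]; exact u.isLt)).1
          have hcge := hcle (finSumFinEquiv (Sum.inr w))
          rw [hw] at hcge
          simp only [submatrix_apply, hN₀, Matrix.of_apply, fromBlocks_apply₁₂,
            Matrix.zero_apply]
          rw [if_pos (by rw [hu]; exact u.isLt), if_neg]
          intro h
          rw [hr, hu] at h
          have := u.isLt
          omega
      | inr u =>
        have hu : ((finSumFinEquiv (Sum.inr u) : Fin (a + ρ)) : ℕ) = a + (u : ℕ) := by simp
        cases j with
        | inl v =>
          have hv : ((finSumFinEquiv (Sum.inl v) : Fin (a + ρ)) : ℕ) = (v : ℕ) := by simp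
          have hc := (hid _ (by rw [hv]; exact v.isLt)).2
          simp only [submatrix_apply, hN₀, Matrix.of_apply, fromBlocks_apply₂₁,
            Matrix.zero_apply]
          rw [if_neg (by rw [hu]; omega), if_neg]
          rw [hc, hv]
          have := v.isLt
          omega
        | inr w =>
          have hw : ((finSumFinEquiv (Sum.inr w) : Fin (a + ρ)) : ℕ) = a + (w : ℕ) := by simp
          have hcge := hcle (finSumFinEquiv (Sum.inr w))
          rw [hw] at hcge
          simp only [submatrix_apply, hN₀, Matrix.of_apply, fromBlocks_apply₂₂]
          rw [if_neg (by rw [hu]; omega), if_pos (by omega)]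
          have e1 : rows (finSumFinEquiv (Sum.inr u)) = rows ⟨a + (u : ℕ), by omega⟩ :=
            congrArg rows (Fin.ext (by simp))
          have e2 : cols (finSumFinEquiv (Sum.inr w)) = cols ⟨a + (w : ℕ), by omega⟩ :=
            congrArg cols (Fin.ext (by simp))
          rw [e1, e2]
    rw [hblock, Matrix.det_fromBlocks_zero₂₁, Matrix.det_one, one_mul]
end

section
/- For a prime power q and natural numbers ρ ≤ m ≤ n, the number of m × n matrices over F_q of rank exactly ρ equals q^{ρ(ρ-1)/2} · ∏_{j=0}^{ρ-1} (q^{m-j} − 1)(q^{n-j} − 1)/(q^{ρ-j} − 1). -/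
open Matrix

section RankCountAux

open LinearMap

variable {K : Type} [Field K] {k m n ρ : ℕ}

private lemma mulVecLin_matrix_inj :
    Function.Injective (Matrix.mulVecLin : Matrix (Fin m) (Fin n) K → _) := by
  intro M N h
  have : LinearMap.toMatrix' M.mulVecLin = LinearMap.toMatrix' N.mulVecLin := by rw [h]
  rwa [← Matrix.toLin'_apply', ← Matrix.toLin'_apply', LinearMap.toMatrix'_toLin',
    LinearMap.toMatrix'_toLin'] at this

private lemma rows_li_iff (C : Matrix (Fin k) (Fin n) K) :
    LinearIndependent K (fun i => C i) ↔ Function.Surjective C.mulVecLin := by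
  constructor
  · intro h
    rw [← LinearMap.range_eq_top]
    apply Submodule.eq_top_of_finrank_eq
    have : C.rank = k := h.rank_matrix.trans (Fintype.card_fin k)
    rw [Matrix.rank] at this
    rw [this, Module.finrank_fin_fun]
  · intro h
    rw [linearIndependent_iff_card_eq_finrank_span]
    have : C.rank = k := by
      rw [Matrix.rank, LinearMap.range_eq_top.2 h, finrank_top, Module.finrank_fin_fun]
    rw [Fintype.card_fin, Set.finrank]
    change k = Module.finrank K (Submodule.span K (Set.range C.row))
    rw [← Matrix.rank_eq_finrank_span_row, this]

private lemma cols_li_iff (B : Matrix (Fin m) (Fin k) K) :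
    LinearIndependent K (fun j => Bᵀ j) ↔ Function.Injective B.mulVecLin := by
  change LinearIndependent K B.col ↔ _
  rw [← Matrix.mulVec_injective_iff, Matrix.coe_mulVecLin]

private lemma rank_factor {A : Matrix (Fin m) (Fin n) K} (hA : A.rank = ρ) :
    ∃ (B : Matrix (Fin m) (Fin ρ) K) (C : Matrix (Fin ρ) (Fin n) K),
      Function.Injective B.mulVecLin ∧ Function.Surjective C.mulVecLin ∧ B * C = A := by
  set f := A.mulVecLin with hf
  set W := LinearMap.range f with hW
  have hfr : Module.finrank K W = ρ := hA
  let b : Module.Basis (Fin ρ) K W := Module.finBasisOfFinrankEq K W hfr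
  let e : W ≃ₗ[K] (Fin ρ → K) := b.equivFun
  let g : (Fin ρ → K) →ₗ[K] (Fin m → K) := W.subtype ∘ₗ (e.symm : (Fin ρ → K) →ₗ[K] W)
  let h : (Fin n → K) →ₗ[K] (Fin ρ → K) := (e : W →ₗ[K] (Fin ρ → K)) ∘ₗ f.rangeRestrict
  refine ⟨LinearMap.toMatrix' g, LinearMap.toMatrix' h, ?_, ?_, ?_⟩
  · rw [← Matrix.toLin'_apply', Matrix.toLin'_toMatrix']
    exact W.injective_subtype.comp e.symm.injective
  · rw [← Matrix.toLin'_apply', Matrix.toLin'_toMatrix']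
    exact e.surjective.comp f.surjective_rangeRestrict
  · rw [← LinearMap.toMatrix'_comp]
    have : g ∘ₗ h = f := by
      apply LinearMap.ext
      intro x
      show W.subtype (e.symm (e (f.rangeRestrict x))) = f x
      rw [e.symm_apply_apply]
      rfl
    rw [this, hf, ← Matrix.toLin'_apply', LinearMap.toMatrix'_toLin']

private lemma rank_mul_eq {B : Matrix (Fin m) (Fin ρ) K} {C : Matrix (Fin ρ) (Fin n) K}
    (hB : Function.Injective B.mulVecLin) (hC : Function.Surjective C.mulVecLin) :
    (B * C).rank = ρ := by
  rw [Matrix.rank, Matrix.mulVecLin_mul,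
    LinearMap.range_comp_of_range_eq_top _ (LinearMap.range_eq_top.2 hC),
    LinearMap.finrank_range_of_inj hB, Module.finrank_fin_fun]

private lemma gl_bij (g : GL (Fin ρ) K) :
    Function.Bijective (mulVecLin (g : Matrix (Fin ρ) (Fin ρ) K)) := by
  have h1 : (mulVecLin ((g⁻¹ : GL (Fin ρ) K) : Matrix (Fin ρ) (Fin ρ) K)).comp
      (mulVecLin (g : Matrix (Fin ρ) (Fin ρ) K)) = LinearMap.id := by
    rw [← Matrix.mulVecLin_mul, g.inv_mul, Matrix.mulVecLin_one]
  have h2 : (mulVecLin (g : Matrix (Fin ρ) (Fin ρ) K)).comp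
      (mulVecLin ((g⁻¹ : GL (Fin ρ) K) : Matrix (Fin ρ) (Fin ρ) K)) = LinearMap.id := by
    rw [← Matrix.mulVecLin_mul, g.mul_inv, Matrix.mulVecLin_one]
  constructor
  · exact Function.LeftInverse.injective (g := mulVecLin _) fun x => by
      rw [← LinearMap.comp_apply, h1]; rfl
  · exact Function.RightInverse.surjective
      (g := mulVecLin ((g⁻¹ : GL (Fin ρ) K) : Matrix (Fin ρ) (Fin ρ) K)) fun x => by
      rw [← LinearMap.comp_apply, h2]; rfl

private lemma right_cancel {C : Matrix (Fin ρ) (Fin n) K} (hC : Function.Surjective C.mulVecLin)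
    {D E : Matrix (Fin k) (Fin ρ) K} (h : D * C = E * C) : D = E := by
  apply mulVecLin_matrix_inj
  apply LinearMap.ext
  intro y
  obtain ⟨x, rfl⟩ := hC y
  have := congrArg (fun M : Matrix (Fin k) (Fin n) K => M.mulVecLin x) h
  simpa [Matrix.mulVecLin_mul] using this

private lemma left_inv_exists {B : Matrix (Fin m) (Fin ρ) K}
    (hB : Function.Injective B.mulVecLin) :
    ∃ L : Matrix (Fin ρ) (Fin m) K, L * B = 1 := by
  obtain ⟨l, hl⟩ := B.mulVecLin.exists_leftInverse_of_injective (ker_eq_bot.2 hB)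
  refine ⟨LinearMap.toMatrix' l, mulVecLin_matrix_inj ?_⟩
  rw [Matrix.mulVecLin_mul, Matrix.mulVecLin_one, ← Matrix.toLin'_apply',
    Matrix.toLin'_toMatrix', hl]

private noncomputable def pickB {ρ m n : ℕ} (A : {A : Matrix (Fin m) (Fin n) K // A.rank = ρ}) :
    Matrix (Fin m) (Fin ρ) K := (rank_factor A.2).choose

private noncomputable def pickC {ρ m n : ℕ} (A : {A : Matrix (Fin m) (Fin n) K // A.rank = ρ}) :
    Matrix (Fin ρ) (Fin n) K := (rank_factor A.2).choose_spec.choose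

private lemma pick_spec {ρ m n : ℕ} (A : {A : Matrix (Fin m) (Fin n) K // A.rank = ρ}) :
    Function.Injective (pickB A).mulVecLin ∧
      Function.Surjective (pickC A).mulVecLin ∧
      pickB A * pickC A = A.1 :=
  (rank_factor A.2).choose_spec.choose_spec

private noncomputable def Phi {ρ m n : ℕ} :
    {A : Matrix (Fin m) (Fin n) K // A.rank = ρ} × GL (Fin ρ) K →
      {B : Matrix (Fin m) (Fin ρ) K // Function.Injective B.mulVecLin} ×
        {C : Matrix (Fin ρ) (Fin n) K // Function.Surjective C.mulVecLin} :=
  fun p =>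
    (⟨pickB p.1 * ((p.2⁻¹ : GL (Fin ρ) K) : Matrix (Fin ρ) (Fin ρ) K), by
        rw [Matrix.mulVecLin_mul, LinearMap.coe_comp]
        exact (pick_spec p.1).1.comp (gl_bij p.2⁻¹).1⟩,
     ⟨(p.2 : Matrix (Fin ρ) (Fin ρ) K) * pickC p.1, by
        rw [Matrix.mulVecLin_mul, LinearMap.coe_comp]
        exact (gl_bij p.2).2.comp (pick_spec p.1).2.1⟩)

private lemma Phi_bij {ρ m n : ℕ} :
    Function.Bijective (Phi (K := K) (ρ := ρ) (m := m) (n := n)) := by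
  constructor
  · rintro ⟨a, g⟩ ⟨a', g'⟩ h
    have h1 : pickB a * ((g⁻¹ : GL (Fin ρ) K) : Matrix (Fin ρ) (Fin ρ) K)
        = pickB a' * ((g'⁻¹ : GL (Fin ρ) K) : Matrix (Fin ρ) (Fin ρ) K) :=
      congrArg (fun x => x.1.1) h
    have h2 : (g : Matrix (Fin ρ) (Fin ρ) K) * pickC a
        = (g' : Matrix (Fin ρ) (Fin ρ) K) * pickC a' :=
      congrArg (fun x => x.2.1) h
    have key : ∀ (b : {A : Matrix (Fin m) (Fin n) K // A.rank = ρ}) (u : GL (Fin ρ) K),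
        (pickB b * ((u⁻¹ : GL (Fin ρ) K) : Matrix (Fin ρ) (Fin ρ) K)) *
          ((u : Matrix (Fin ρ) (Fin ρ) K) * pickC b) = b.1 := by
      intro b u
      rw [Matrix.mul_assoc, ← Matrix.mul_assoc ((u⁻¹ : GL (Fin ρ) K) : Matrix (Fin ρ) (Fin ρ) K),
        u.inv_mul, Matrix.one_mul, (pick_spec b).2.2]
    have ha : a = a' := by
      apply Subtype.ext
      rw [← key a g, ← key a' g', h1, h2]
    subst ha
    have hg : (g : Matrix (Fin ρ) (Fin ρ) K) = (g' : Matrix (Fin ρ) (Fin ρ) K) :=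
      right_cancel (pick_spec a).2.1 h2
    exact Prod.ext rfl (Units.ext hg)
  · rintro ⟨⟨B, hB⟩, ⟨C, hC⟩⟩
    have hA : (B * C).rank = ρ := rank_mul_eq hB hC
    set a : {A : Matrix (Fin m) (Fin n) K // A.rank = ρ} := ⟨B * C, hA⟩ with ha
    obtain ⟨hB₀, hC₀, hBC₀⟩ := pick_spec a
    obtain ⟨L, hL⟩ := left_inv_exists hB
    set g₀ := L * pickB a with hg₀
    have hgC : g₀ * pickC a = C := by
      rw [hg₀, Matrix.mul_assoc, hBC₀]
      show L * (B * C) = C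
      rw [← Matrix.mul_assoc, hL, Matrix.one_mul]
    have hg₀surj : Function.Surjective g₀.mulVecLin := by
      have : Function.Surjective (g₀ * pickC a).mulVecLin := by rw [hgC]; exact hC
      rw [Matrix.mulVecLin_mul, LinearMap.coe_comp] at this
      exact this.of_comp
    have hunit : IsUnit g₀ := by
      rw [← Matrix.mulVec_surjective_iff_isUnit]
      exact hg₀surj
    obtain ⟨u, hu⟩ := hunit
    have hBg : B * g₀ = pickB a := by
      apply right_cancel hC₀
      rw [Matrix.mul_assoc, hgC, hBC₀]
    refine ⟨(a, u), ?_⟩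
    apply Prod.ext
    · apply Subtype.ext
      show pickB a * ((u⁻¹ : GL (Fin ρ) K) : Matrix (Fin ρ) (Fin ρ) K) = B
      rw [← hBg, Matrix.mul_assoc, ← hu, u.mul_inv, Matrix.mul_one]
    · apply Subtype.ext
      show (u : Matrix (Fin ρ) (Fin ρ) K) * pickC a = C
      rw [hu, hgC]

variable [Fintype K]

private lemma card_inj (ρ m : ℕ) (h : ρ ≤ m) :
    Nat.card {B : Matrix (Fin m) (Fin ρ) K // Function.Injective B.mulVecLin}
      = ∏ i : Fin ρ, (Fintype.card K ^ m - Fintype.card K ^ i.val) := by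
  have e1 : {B : Matrix (Fin m) (Fin ρ) K // Function.Injective B.mulVecLin}
      ≃ {s : Fin ρ → Fin m → K // LinearIndependent K s} :=
    { toFun := fun B => ⟨fun j => B.1ᵀ j, (cols_li_iff B.1).2 B.2⟩
      invFun := fun s => ⟨(Matrix.of s.1)ᵀ, (cols_li_iff (Matrix.of s.1)ᵀ).1 (by
        exact s.2)⟩
      left_inv := fun B => rfl
      right_inv := fun s => rfl }
  rw [Nat.card_congr e1, card_linearIndependent (by simpa using h)]
  simp

private lemma card_surj (ρ n : ℕ) (h : ρ ≤ n) :
    Nat.card {C : Matrix (Fin ρ) (Fin n) K // Function.Surjective C.mulVecLin}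
      = ∏ i : Fin ρ, (Fintype.card K ^ n - Fintype.card K ^ i.val) := by
  have e1 : {C : Matrix (Fin ρ) (Fin n) K // Function.Surjective C.mulVecLin}
      ≃ {s : Fin ρ → Fin n → K // LinearIndependent K s} :=
    { toFun := fun C => ⟨fun i => C.1 i, (rows_li_iff C.1).2 C.2⟩
      invFun := fun s => ⟨Matrix.of s.1, (rows_li_iff (Matrix.of s.1)).1 s.2⟩
      left_inv := fun C => rfl
      right_inv := fun s => rfl }
  rw [Nat.card_congr e1, card_linearIndependent (by simpa using h)]
  simp

private lemma prod_cast_aux (q ρ M : ℕ) (hρM : ρ ≤ M) (hq : 1 ≤ q) :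
    ((∏ i ∈ Finset.range ρ, (q ^ M - q ^ i) : ℕ) : ℚ)
      = (q : ℚ) ^ (ρ * (ρ - 1) / 2) * ∏ j ∈ Finset.range ρ, ((q : ℚ) ^ (M - j) - 1) := by
  rw [Nat.cast_prod]
  have h1 : ∀ i ∈ Finset.range ρ, ((q ^ M - q ^ i : ℕ) : ℚ)
      = (q : ℚ) ^ i * ((q : ℚ) ^ (M - i) - 1) := by
    intro i hi
    have hiM : i ≤ M := le_trans (le_of_lt (Finset.mem_range.1 hi)) hρM
    rw [Nat.cast_sub (Nat.pow_le_pow_right hq hiM)]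
    push_cast
    rw [mul_sub, mul_one, ← pow_add, Nat.add_sub_cancel' hiM]
  rw [Finset.prod_congr rfl h1, Finset.prod_mul_distrib, Finset.prod_pow_eq_pow_sum,
    Finset.sum_range_id]

end RankCountAux

/-- The number of `m × n` matrices of rank exactly `ρ` over a finite field with `q`
elements equals `q^{ρ(ρ-1)/2} ∏_{j=0}^{ρ-1} (q^{m-j}-1)(q^{n-j}-1)/(q^{ρ-j}-1)`. -/
theorem card_rank_eq (q ρ m n : ℕ) (hρ : ρ ≤ m) (hmn : m ≤ n) (hq : IsPrimePow q)
    (K : Type) [Field K] [Fintype K] (hK : Fintype.card K = q) :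
    (Nat.card {A : Matrix (Fin m) (Fin n) K // A.rank = ρ} : ℚ) =
      (q : ℚ) ^ (ρ * (ρ - 1) / 2) *
        ∏ j ∈ Finset.range ρ,
          ((q : ℚ) ^ (m - j) - 1) * ((q : ℚ) ^ (n - j) - 1) / ((q : ℚ) ^ (ρ - j) - 1) := by
  have hρn : ρ ≤ n := hρ.trans hmn
  have hq2 : 2 ≤ q := hq.two_le
  have hq1 : 1 ≤ q := le_trans one_le_two hq2
  -- the counting identity over ℕ
  have hcard : Nat.card {A : Matrix (Fin m) (Fin n) K // A.rank = ρ}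
        * Nat.card (GL (Fin ρ) K)
      = (∏ i ∈ Finset.range ρ, (q ^ m - q ^ i)) * ∏ i ∈ Finset.range ρ, (q ^ n - q ^ i) := by
    rw [← Nat.card_prod, Nat.card_congr (Equiv.ofBijective _ (Phi_bij (K := K))),
      Nat.card_prod, card_inj ρ m hρ, card_surj ρ n hρn]
    rw [← Fin.prod_univ_eq_prod_range (fun i => q ^ m - q ^ i) ρ,
      ← Fin.prod_univ_eq_prod_range (fun i => q ^ n - q ^ i) ρ, hK]
  have hGL : Nat.card (GL (Fin ρ) K) = ∏ i ∈ Finset.range ρ, (q ^ ρ - q ^ i) := by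
    rw [Matrix.card_GL_field, hK, ← Fin.prod_univ_eq_prod_range (fun i => q ^ ρ - q ^ i) ρ]
  rw [hGL] at hcard
  -- cast to ℚ
  set s := ρ * (ρ - 1) / 2 with hs
  set a : ℚ := (q : ℚ) with haq
  set Pm := ∏ j ∈ Finset.range ρ, (a ^ (m - j) - 1) with hPm
  set Pn := ∏ j ∈ Finset.range ρ, (a ^ (n - j) - 1) with hPn
  set Pρ := ∏ j ∈ Finset.range ρ, (a ^ (ρ - j) - 1) with hPρ
  have hcast : (Nat.card {A : Matrix (Fin m) (Fin n) K // A.rank = ρ} : ℚ) * (a ^ s * Pρ)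
      = (a ^ s * Pm) * (a ^ s * Pn) := by
    have := congrArg (fun x : ℕ => (x : ℚ)) hcard
    push_cast only [Nat.cast_mul] at this
    rw [prod_cast_aux q ρ ρ le_rfl hq1, prod_cast_aux q ρ m hρ hq1,
      prod_cast_aux q ρ n hρn hq1] at this
    exact this
  have ha0 : a ≠ 0 := by
    rw [haq]
    exact_mod_cast (by omega : q ≠ 0)
  have has : a ^ s ≠ 0 := pow_ne_zero _ ha0
  have hPρ0 : Pρ ≠ 0 := by
    rw [hPρ]
    apply Finset.prod_ne_zero_iff.2
    intro j hj
    have hjρ : j < ρ := Finset.mem_range.1 hj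
    have h1a : (1 : ℚ) < a ^ (ρ - j) := by
      apply one_lt_pow₀
      · rw [haq]; exact_mod_cast hq2
      · omega
    exact sub_ne_zero_of_ne h1a.ne'
  have hrhs : (q : ℚ) ^ s *
      ∏ j ∈ Finset.range ρ,
        ((q : ℚ) ^ (m - j) - 1) * ((q : ℚ) ^ (n - j) - 1) / ((q : ℚ) ^ (ρ - j) - 1)
      = a ^ s * (Pm * Pn / Pρ) := by
    rw [Finset.prod_div_distrib, Finset.prod_mul_distrib]
  rw [hrhs]
  apply mul_right_cancel₀ (mul_ne_zero has hPρ0)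
  rw [hcast]
  field_simp
end

section
/- Let r ≤ m ≤ n be positive integers and consider the formal data N_j = r+1−j, ν_j = (m+1−j)(n+1−j) for j ∈ S = {1,…,r}, together with Euler characteristics χ_J for J ⊆ S which vanish for every nonempty J ≠ S. Then for every integer d ≥ 2, the twisted sum Σ_{∅≠J⊆S, d | gcd_{j∈J} N_j} χ_J · ∏_{j∈J} 1/(N_j s + ν_j) is identically zero, because d does not divide gcd_{j∈S}(N_j) = gcd(r, r−1, …, 1) = 1. -/
/-- Computational core of the holomorphy conjecture for determinantal varieties:
with `N_j = r+1-j`, `ν_j = (m+1-j)(n+1-j)` for `j ∈ S = {1,…,r}` and Euler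
characteristics `χ_J` vanishing for all nonempty `J ≠ S`, the twisted sum over
nonempty `J ⊆ S` with `d ∣ gcd_{j∈J} N_j` is identically zero for `d ≥ 2`,
because `gcd(r, r-1, …, 1) = 1`. -/
theorem twisted_zeta_vanishes (r m n : ℕ) (hr : 1 ≤ r) (hrm : r ≤ m) (hmn : m ≤ n)
    (χ : Finset ℕ → ℚ)
    (hχ : ∀ J ⊆ Finset.Icc 1 r, J ≠ ∅ → J ≠ Finset.Icc 1 r → χ J = 0)
    (d : ℕ) (hd : 2 ≤ d) (s : ℚ) :
    ∑ J ∈ (Finset.Icc 1 r).powerset.filter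
        (fun J => J ≠ ∅ ∧ d ∣ J.gcd (fun j => r + 1 - j)),
      χ J * ∏ j ∈ J,
        1 / (((r + 1 - j : ℕ) : ℚ) * s + ((m + 1 - j : ℕ) : ℚ) * ((n + 1 - j : ℕ) : ℚ)) = 0 := by
  apply Finset.sum_eq_zero
  intro J hJ
  simp only [Finset.mem_filter, Finset.mem_powerset] at hJ
  obtain ⟨hsub, hne, hdvd⟩ := hJ
  rcases eq_or_ne J (Finset.Icc 1 r) with h | h
  · exfalso
    have hrJ : r ∈ J := by
      rw [h]; exact Finset.mem_Icc.mpr ⟨hr, le_refl r⟩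
    have h1 : J.gcd (fun j => r + 1 - j) ∣ r + 1 - r :=
      Finset.gcd_dvd hrJ
    have : r + 1 - r = 1 := by omega
    rw [this] at h1
    have := Nat.le_of_dvd one_pos (dvd_trans hdvd h1)
    omega
  · rw [hχ J hsub hne h, zero_mul]
end
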